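/- Let Δ > 0, let a be a real number, and let f be a continuously differentiable complex-valued function on the closed interval [a, a+Δ]. Then for every u ∈ [a, a+Δ], |f(u)|² ≤ Δ^{−1} ∫_a^{a+Δ} |f(x)|² dx + 2 · (∫_a^{a+Δ} |f(x)|² dx)^{1/2} · (∫_a^{a+Δ} |f′(x)|² dx)^{1/2}. -/

import Mathlib

open MeasureTheory intervalIntegral Set

private lemma sobolev_cs (a b c d : ℝ) :
    |a * c + b * d| ≤ Real.sqrt (a ^ 2 + b ^ 2) * Real.sqrt (c ^ 2 + d ^ 2) := by
  have h1 : (a * c + b * d) ^ 2 ≤ (a ^ 2 + b ^ 2) * (c ^ 2 + d ^ 2) := by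
    nlinarith [sq_nonneg (a * d - b * c)]
  have h2 := Real.sqrt_le_sqrt h1
  rwa [Real.sqrt_sq_eq_abs, Real.sqrt_mul (by positivity)] at h2

private lemma norm_complex_eq (z : ℂ) : ‖z‖ = Real.sqrt (z.re ^ 2 + z.im ^ 2) := by
  rw [Complex.norm_def, Complex.normSq_apply]; ring_nf

/-- **Sobolev's inequality** (the basic inequality of the classical large sieve):
if `f` is continuously differentiable on `[a, a+Δ]` with derivative `f'`, then for every
`u ∈ [a, a+Δ]`,
`‖f u‖² ≤ Δ⁻¹ ∫_a^{a+Δ} ‖f‖² + 2 (∫_a^{a+Δ} ‖f‖²)^{1/2} (∫_a^{a+Δ} ‖f'‖²)^{1/2}`. -/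
theorem sobolev_inequality (a Δ : ℝ) (hΔ : 0 < Δ) (f f' : ℝ → ℂ)
    (hderiv : ∀ x ∈ Set.Icc a (a + Δ), HasDerivWithinAt f (f' x) (Set.Icc a (a + Δ)) x)
    (hcont : ContinuousOn f' (Set.Icc a (a + Δ))) :
    ∀ u ∈ Set.Icc a (a + Δ),
      ‖f u‖ ^ 2 ≤ Δ⁻¹ * (∫ x in a..(a + Δ), ‖f x‖ ^ 2)
        + 2 * Real.sqrt (∫ x in a..(a + Δ), ‖f x‖ ^ 2)
            * Real.sqrt (∫ x in a..(a + Δ), ‖f' x‖ ^ 2) := by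
  intro u hu
  have hab : a ≤ a + Δ := by linarith
  set b := a + Δ with hb
  have hfc : ContinuousOn f (Icc a b) := fun x hx => (hderiv x hx).continuousWithinAt
  set g' : ℝ → ℝ := fun x => 2 * ((f x).re * (f' x).re + (f x).im * (f' x).im) with hg'def
  -- continuity facts
  have hfre : ContinuousOn (fun y => (f y).re) (Icc a b) :=
    Complex.continuous_re.comp_continuousOn hfc
  have hfim : ContinuousOn (fun y => (f y).im) (Icc a b) :=
    Complex.continuous_im.comp_continuousOn hfc
  have hf're : ContinuousOn (fun y => (f' y).re) (Icc a b) :=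
    Complex.continuous_re.comp_continuousOn hcont
  have hf'im : ContinuousOn (fun y => (f' y).im) (Icc a b) :=
    Complex.continuous_im.comp_continuousOn hcont
  have hg'c : ContinuousOn g' (Icc a b) :=
    continuousOn_const.mul ((hfre.mul hf're).add (hfim.mul hf'im))
  have hgc : ContinuousOn (fun y => ‖f y‖ ^ 2) (Icc a b) :=
    (continuous_pow 2).comp_continuousOn hfc.norm
  have hF'c : ContinuousOn (fun x => 2 * ‖f x‖ * ‖f' x‖) (Icc a b) :=
    (continuousOn_const.mul hfc.norm).mul hcont.norm
  -- derivative of ‖f‖²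
  have hgderiv : ∀ x ∈ Icc a b, HasDerivWithinAt (fun y => ‖f y‖ ^ 2) (g' x) (Icc a b) x := by
    intro x hx
    have h1 : HasDerivWithinAt (fun y => (f y).re) ((f' x).re) (Icc a b) x :=
      (Complex.reCLM.hasFDerivAt.comp_hasDerivWithinAt x (hderiv x hx))
    have h2 : HasDerivWithinAt (fun y => (f y).im) ((f' x).im) (Icc a b) x :=
      (Complex.imCLM.hasFDerivAt.comp_hasDerivWithinAt x (hderiv x hx))
    have h3 := (h1.mul h1).add (h2.mul h2)
    have heq : ∀ y, ‖f y‖ ^ 2 = (f y).re * (f y).re + (f y).im * (f y).im := by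
      intro y
      rw [Complex.sq_norm, Complex.normSq_apply]
    have h4 : HasDerivWithinAt (fun y => ‖f y‖ ^ 2)
        ((f' x).re * (f x).re + (f x).re * (f' x).re
          + ((f' x).im * (f x).im + (f x).im * (f' x).im)) (Icc a b) x :=
      h3.congr (fun y _ => heq y) (heq x)
    convert h4 using 1
    simp only [hg'def]; ring
  -- pointwise bound on g'
  have hg'bound : ∀ x ∈ Icc a b, |g' x| ≤ 2 * ‖f x‖ * ‖f' x‖ := by
    intro x _
    have h := sobolev_cs (f x).re (f x).im (f' x).re (f' x).im
    rw [← norm_complex_eq, ← norm_complex_eq] at h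
    calc |g' x| = 2 * |(f x).re * (f' x).re + (f x).im * (f' x).im| := by
          rw [hg'def, abs_mul, abs_two]
      _ ≤ 2 * (‖f x‖ * ‖f' x‖) := by linarith
      _ = 2 * ‖f x‖ * ‖f' x‖ := by ring
  -- FTC
  have hftc : ∀ t ∈ Icc a b, (∫ x in t..u, g' x) = ‖f u‖ ^ 2 - ‖f t‖ ^ 2 := by
    intro t ht
    have hsub : uIcc t u ⊆ Icc a b := uIcc_subset_Icc ht hu
    apply intervalIntegral.integral_eq_sub_of_hasDeriv_right (hgc.mono hsub)
    · intro x hx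
      have hx1 : x ∈ Ioo a b :=
        ⟨lt_of_le_of_lt (le_min ht.1 hu.1) hx.1, lt_of_lt_of_le hx.2 (max_le ht.2 hu.2)⟩
      exact ((hgderiv x ⟨hx1.1.le, hx1.2.le⟩).hasDerivAt
        (Icc_mem_nhds hx1.1 hx1.2)).hasDerivWithinAt
    · exact (hg'c.mono hsub).intervalIntegrable
  have hg'int : IntervalIntegrable g' volume a b := hg'c.intervalIntegrable_of_Icc hab
  have hF'int : IntervalIntegrable (fun x => 2 * ‖f x‖ * ‖f' x‖) volume a b :=
    hF'c.intervalIntegrable_of_Icc hab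
  set C := ∫ x in a..b, 2 * ‖f x‖ * ‖f' x‖ with hC
  -- key pointwise-in-t bound
  have key : ∀ t ∈ Icc a b, ‖f u‖ ^ 2 ≤ ‖f t‖ ^ 2 + C := by
    intro t ht
    have h1 : ‖f u‖ ^ 2 = ‖f t‖ ^ 2 + ∫ x in t..u, g' x := by rw [hftc t ht]; ring
    have h2 : |∫ x in t..u, g' x| ≤ |(∫ x in t..u, |g' x|)| := by
      have h : ‖∫ x in t..u, g' x‖ ≤ |(∫ x in t..u, ‖g' x‖)| :=
        intervalIntegral.norm_integral_le_abs_integral_norm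
      simpa [Real.norm_eq_abs] using h
    have h3 : |(∫ x in t..u, |g' x|)| ≤ |(∫ x in a..b, |g' x|)| := by
      apply intervalIntegral.abs_integral_mono_interval
      · rw [uIoc, uIoc, min_eq_left hab, max_eq_right hab]
        exact Ioc_subset_Ioc (le_min ht.1 hu.1) (max_le ht.2 hu.2)
      · filter_upwards with x using abs_nonneg _
      · exact hg'int.abs
    have h4 : |(∫ x in a..b, |g' x|)| = ∫ x in a..b, |g' x| :=
      abs_of_nonneg (intervalIntegral.integral_nonneg hab fun x _ => abs_nonneg _)
    have h5 : (∫ x in a..b, |g' x|) ≤ C :=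
      intervalIntegral.integral_mono_on hab hg'int.abs hF'int hg'bound
    have h6 : (∫ x in t..u, g' x) ≤ C := by
      calc (∫ x in t..u, g' x) ≤ |∫ x in t..u, g' x| := le_abs_self _
        _ ≤ C := by linarith
    linarith
  -- integrate over t
  have hgint : IntervalIntegrable (fun y => ‖f y‖ ^ 2) volume a b :=
    hgc.intervalIntegrable_of_Icc hab
  have hmain : Δ * ‖f u‖ ^ 2 ≤ (∫ t in a..b, ‖f t‖ ^ 2) + Δ * C := by
    have h := intervalIntegral.integral_mono_on hab intervalIntegrable_const
      (hgint.add intervalIntegrable_const) key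
    rw [intervalIntegral.integral_const, intervalIntegral.integral_add hgint
      intervalIntegrable_const, intervalIntegral.integral_const] at h
    simp only [hb, add_sub_cancel_left, smul_eq_mul] at h
    linarith
  -- Cauchy–Schwarz for the integral
  have hCS : C ≤ 2 * Real.sqrt (∫ x in a..b, ‖f x‖ ^ 2) * Real.sqrt (∫ x in a..b, ‖f' x‖ ^ 2) := by
    have hfin : IsFiniteMeasure (volume.restrict (Ioc a b)) :=
      ⟨by rw [Measure.restrict_apply_univ]; exact measure_Ioc_lt_top⟩
    obtain ⟨M, hM⟩ := isCompact_Icc.exists_bound_of_continuousOn hfc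
    obtain ⟨M', hM'⟩ := isCompact_Icc.exists_bound_of_continuousOn hcont
    have hmem : MemLp (fun x => ‖f x‖) (ENNReal.ofReal 2) (volume.restrict (Ioc a b)) := by
      refine MemLp.of_bound ?_ M ?_
      · exact ((hfc.norm.mono Ioc_subset_Icc_self).aestronglyMeasurable measurableSet_Ioc)
      · filter_upwards [ae_restrict_mem measurableSet_Ioc] with x hx
        simpa using hM x (Ioc_subset_Icc_self hx)
    have hmem' : MemLp (fun x => ‖f' x‖) (ENNReal.ofReal 2) (volume.restrict (Ioc a b)) := by
      refine MemLp.of_bound ?_ M' ?_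
      · exact ((hcont.norm.mono Ioc_subset_Icc_self).aestronglyMeasurable measurableSet_Ioc)
      · filter_upwards [ae_restrict_mem measurableSet_Ioc] with x hx
        simpa using hM' x (Ioc_subset_Icc_self hx)
    have hconj : Real.HolderConjugate 2 2 := Real.HolderConjugate.two_two
    have hH := MeasureTheory.integral_mul_le_Lp_mul_Lq_of_nonneg hconj
      (f := fun x => ‖f x‖) (g := fun x => ‖f' x‖)
      (Filter.Eventually.of_forall fun x => norm_nonneg _)
      (Filter.Eventually.of_forall fun x => norm_nonneg _) hmem hmem'
    simp only [Real.rpow_two] at hH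
    have e1 : (∫ x in a..b, 2 * ‖f x‖ * ‖f' x‖) = 2 * ∫ x in Ioc a b, ‖f x‖ * ‖f' x‖ := by
      rw [intervalIntegral.integral_of_le hab, ← MeasureTheory.integral_const_mul]
      congr 1; ext x; ring
    have e2 : (∫ x in a..b, ‖f x‖ ^ 2) = ∫ x in Ioc a b, ‖f x‖ ^ 2 :=
      intervalIntegral.integral_of_le hab
    have e3 : (∫ x in a..b, ‖f' x‖ ^ 2) = ∫ x in Ioc a b, ‖f' x‖ ^ 2 :=
      intervalIntegral.integral_of_le hab
    rw [hC, e1, e2, e3, Real.sqrt_eq_rpow, Real.sqrt_eq_rpow]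
    calc 2 * ∫ x in Ioc a b, ‖f x‖ * ‖f' x‖
        ≤ 2 * ((∫ x in Ioc a b, ‖f x‖ ^ 2) ^ (1 / (2:ℝ))
            * (∫ x in Ioc a b, ‖f' x‖ ^ 2) ^ (1 / (2:ℝ))) := by linarith
      _ = 2 * (∫ x in Ioc a b, ‖f x‖ ^ 2) ^ (1 / (2:ℝ))
            * (∫ x in Ioc a b, ‖f' x‖ ^ 2) ^ (1 / (2:ℝ)) := by ring
  -- conclude
  have h1 : ‖f u‖ ^ 2 ≤ Δ⁻¹ * (∫ x in a..b, ‖f x‖ ^ 2) + C := by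
    have h2 : ‖f u‖ ^ 2 = Δ⁻¹ * (Δ * ‖f u‖ ^ 2) := by field_simp
    rw [h2]
    calc Δ⁻¹ * (Δ * ‖f u‖ ^ 2) ≤ Δ⁻¹ * ((∫ t in a..b, ‖f t‖ ^ 2) + Δ * C) := by
          apply mul_le_mul_of_nonneg_left hmain (by positivity)
      _ = Δ⁻¹ * (∫ x in a..b, ‖f x‖ ^ 2) + C := by field_simp
  linarith
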